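/- Suppose a Δ⁰₂ set A obeys a cost function c. Then there is a computably enumerable set D such that A ≤_T D and D also obeys c. -/

import Mathlib

/-! Basic definitions: Cantor space, initial segments, computable approximations,
Martin-Löf randomness, change counting, cost functions, oracle computability. -/

/-- The length-`n` initial segment of `Z : ℕ → Bool`, as a list of booleans. -/
def restr (Z : ℕ → Bool) (n : ℕ) : List Bool := (List.range n).map Z

/-- `σ` is an initial segment of `Z`. -/
def InitSeg (σ : List Bool) (Z : ℕ → Bool) : Prop := σ = restr Z σ.length

/-- `Z` is Martin-Löf random: for every computable sequence of strings with
finite total measure, only finitely many are initial segments of `Z`. -/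
def MLRandom (Z : ℕ → Bool) : Prop :=
  ∀ σ : ℕ → List Bool, Computable σ →
    Summable (fun i => ((1 : ℝ) / 2) ^ (σ i).length) →
    {i | InitSeg (σ i) Z}.Finite

/-- `(Zs s) s∈ℕ` converges pointwise to `Z`. -/
def Approx (Zs : ℕ → ℕ → Bool) (Z : ℕ → Bool) : Prop :=
  ∀ x, ∃ t, ∀ s, t ≤ s → Zs s x = Z x

/-- `Zs` is a computable approximation of `Z`. -/
def CompApprox (Zs : ℕ → ℕ → Bool) (Z : ℕ → Bool) : Prop :=
  Computable₂ Zs ∧ Approx Zs Z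

/-- `Z` is Δ⁰₂: it has a computable approximation. -/
def Delta02 (Z : ℕ → Bool) : Prop := ∃ Zs, CompApprox Zs Z

/-- The set of stages `s ≥ 1` at which the length-`n` initial segment of the
approximation changes. -/
def changeStages (Zs : ℕ → ℕ → Bool) (n : ℕ) : Set ℕ :=
  {s | 1 ≤ s ∧ restr (Zs s) n ≠ restr (Zs (s - 1)) n}

/-- `Z` is a `g`-change set. -/
def GChangeSet (Z : ℕ → Bool) (g : ℕ → ℕ) : Prop :=
  ∃ Zs, CompApprox Zs Z ∧
    ∀ n, (changeStages Zs n).Finite ∧ (changeStages Zs n).ncard ≤ g n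

/-- `Z` is ω-c.a.: a `g`-change set for some computable `g`. -/
def OmegaCA (Z : ℕ → Bool) : Prop := ∃ g : ℕ → ℕ, Computable g ∧ GChangeSet Z g

/-- Lexicographic order on Cantor space. -/
def LexLE (X Y : ℕ → Bool) : Prop :=
  X = Y ∨ ∃ n, (∀ i, i < n → X i = Y i) ∧ X n = false ∧ Y n = true

/-- `Z` is left-c.e. -/
def LeftCE (Z : ℕ → Bool) : Prop :=
  ∃ Zs, CompApprox Zs Z ∧ ∀ s, LexLE (Zs s) (Zs (s + 1))

/-- `c` is a cost function: computable, nonnegative, nondecreasing in the stage,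
nonincreasing in the number. -/
def CostFunction (c : ℕ → ℕ → ℚ) : Prop :=
  Computable₂ c ∧ (∀ x s, 0 ≤ c x s) ∧
    (∀ x s t, s ≤ t → c x s ≤ c x t) ∧ (∀ x y s, x ≤ y → c y s ≤ c x s)

/-- The limit condition for a cost function. -/
def LimitCondition (c : ℕ → ℕ → ℚ) : Prop :=
  ∀ ε : ℚ, 0 < ε → ∃ x₀, ∀ x, x₀ ≤ x → ∀ s, c x s ≤ ε

/-- A benign cost function: the number of pairwise disjoint intervals `[x,s)` with
`c x s ≥ 2^{-k}` is computably bounded in `k`. -/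
def Benign (c : ℕ → ℕ → ℚ) : Prop :=
  ∃ b : ℕ → ℕ, Computable b ∧
    ∀ k m (x s : ℕ → ℕ), (∀ i, i < m → x i < s i) →
      (∀ i, i + 1 < m → s i ≤ x (i + 1)) →
      (∀ i, i < m → ((1 : ℚ) / 2) ^ k ≤ c (x i) (s i)) → m ≤ b k

open Classical in
/-- The cost paid at stage `s` by the approximation `As`: if `s ≥ 1` and the
approximation changes at `s`, it is `c x s` where `x` is the least changed number. -/
noncomputable def stageCost (c : ℕ → ℕ → ℚ) (As : ℕ → ℕ → Bool) (s : ℕ) : ℚ :=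
  if s = 0 then 0
  else if h : ∃ x, As s x ≠ As (s - 1) x then c (Nat.find h) s else 0

/-- `A` obeys the cost function `c`: some computable approximation of `A` has
finite total cost. -/
def Obeys (A : ℕ → Bool) (c : ℕ → ℕ → ℚ) : Prop :=
  ∃ As, CompApprox As A ∧ ∃ B : ℚ, ∀ F : Finset ℕ, ∑ s ∈ F, stageCost c As s ≤ B

/-- Functions partial recursive in the oracle `O`. -/
inductive RecIn (O : ℕ →. ℕ) : (ℕ →. ℕ) → Prop
  | oracle : RecIn O O
  | zero : RecIn O (pure 0)
  | succ : RecIn O ↑Nat.succ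
  | left : RecIn O ↑fun n : ℕ => n.unpair.1
  | right : RecIn O ↑fun n : ℕ => n.unpair.2
  | pair {f g} : RecIn O f → RecIn O g → RecIn O fun n => Nat.pair <$> f n <*> g n
  | comp {f g} : RecIn O f → RecIn O g → RecIn O fun n => g n >>= f
  | prec {f g} : RecIn O f → RecIn O g → RecIn O (Nat.unpaired fun a n =>
      n.rec (f a) fun y IH => do let i ← IH; g (Nat.pair a (Nat.pair y i)))
  | rfind {f} : RecIn O f → RecIn O fun a =>
      Nat.rfind fun n => (fun m => m = 0) <$> f (Nat.pair a n)

/-- The characteristic function of `A` as a partial function ℕ →. ℕ. -/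
def charFn (A : ℕ → Bool) : ℕ →. ℕ := fun n => Part.some (cond (A n) 1 0)

/-- Turing reducibility: `A ≤_T Z`. -/
def TuringLE (A Z : ℕ → Bool) : Prop := RecIn (charFn Z) (charFn A)

/-- `A` is computably enumerable: the domain of a partial computable function. -/
def CE (A : ℕ → Bool) : Prop :=
  ∃ f : ℕ →. ℕ, Nat.Partrec f ∧ ∀ x, A x = true ↔ (f x).Dom

/-- A Π⁰₁ class of elements of Cantor space. -/
def Pi01 (P : Set (ℕ → Bool)) : Prop :=
  ∃ f : ℕ → Option (List Bool), Computable f ∧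
    P = {Z | ∀ i σ, f i = some σ → ¬ InitSeg σ Z}

/-- The c.e. set `W_e`: the domain of the `e`-th partial computable function. -/
def Wset (e : ℕ) : Set ℕ :=
  {x | ((Denumerable.ofNat Nat.Partrec.Code e).eval x).Dom}

/-- The stage-`s` approximation to `W_e`, via step-bounded evaluation. -/
def WAt (e s x : ℕ) : Prop :=
  (Nat.Partrec.Code.evaln s (Denumerable.ofNat Nat.Partrec.Code e) x).isSome

/-- `A` is promptly simple. -/
def PromptlySimple (A : ℕ → Bool) : Prop :=
  CE A ∧ {x | A x = false}.Infinite ∧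
    ∃ As : ℕ → ℕ → Bool, Computable₂ As ∧
      (∀ s x, As s x = true → As (s + 1) x = true) ∧
      (∀ x, A x = true ↔ ∃ s, As s x = true) ∧
      ∀ e, (Wset e).Infinite →
        ∃ s x, 1 ≤ s ∧ WAt e s x ∧ ¬ WAt e (s - 1) x ∧ As s x = true

/-! ### Auxiliary material for Statement 6 -/

/-- Number of changes of the approximation `As` at `x` among stages `1..s`. -/
def chCnt (As : ℕ → ℕ → Bool) (x : ℕ) (s : ℕ) : ℕ :=
  Nat.rec 0 (fun t ih => ih + (bif As (t + 1) x == As t x then 0 else 1)) s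

lemma chCnt_succ (As : ℕ → ℕ → Bool) (x t : ℕ) :
    chCnt As x (t + 1) = chCnt As x t + (bif As (t + 1) x == As t x then 0 else 1) := rfl

lemma chCnt_mono (As : ℕ → ℕ → Bool) (x : ℕ) : Monotone (chCnt As x) := by
  apply monotone_nat_of_le_succ
  intro t
  rw [chCnt_succ]
  exact Nat.le_add_right _ _

lemma chCnt_succ_eq_iff (As : ℕ → ℕ → Bool) (x t : ℕ) :
    chCnt As x (t + 1) = chCnt As x t ↔ As (t + 1) x = As t x := by
  rw [chCnt_succ]
  cases h : (As (t + 1) x == As t x) <;> simp_all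

lemma chCnt_stab {As : ℕ → ℕ → Bool} {A : ℕ → Bool} (h : Approx As A) (x : ℕ) :
    ∃ t, ∀ s, t ≤ s → chCnt As x s = chCnt As x t := by
  obtain ⟨t, ht⟩ := h x
  refine ⟨t, fun s hs => ?_⟩
  induction s with
  | zero => rw [Nat.le_zero.mp hs]
  | succ n ih =>
    rcases Nat.lt_or_ge t (n + 1) with h1 | h1
    · have h2 : t ≤ n := Nat.lt_succ_iff.mp h1
      rw [(chCnt_succ_eq_iff ..).2 (by rw [ht (n + 1) (by omega), ht n h2]), ih h2]
    · have : t = n + 1 := le_antisymm hs h1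
      rw [this]

lemma chCnt_stab_zero {As : ℕ → ℕ → Bool} {A : ℕ → Bool} (h : Approx As A) (x : ℕ) :
    ∃ t, ∀ s, chCnt As x s ≤ chCnt As x t := by
  obtain ⟨t, ht⟩ := chCnt_stab h x
  refine ⟨t, fun s => ?_⟩
  rcases Nat.le_total s t with hst | hst
  · exact chCnt_mono As x hst
  · exact le_of_eq (ht s hst)

lemma chCnt_computable {As : ℕ → ℕ → Bool} (hAs : Computable₂ As) :
    Computable₂ (chCnt As) := by
  have hbool : Computable fun q : (ℕ × ℕ) × ℕ × ℕ =>
      (As (q.2.1 + 1) q.1.1 == As q.2.1 q.1.1) :=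
    (Primrec.beq.to_comp).comp
      (hAs.comp ((Primrec.succ.to_comp).comp (Computable.fst.comp Computable.snd))
        (Computable.fst.comp Computable.fst))
      (hAs.comp (Computable.fst.comp Computable.snd) (Computable.fst.comp Computable.fst))
  have hstep : Computable₂ fun (p : ℕ × ℕ) (q : ℕ × ℕ) =>
      q.2 + (bif As (q.1 + 1) p.1 == As q.1 p.1 then 0 else 1) :=
    ((Primrec.nat_add.to_comp).comp (Computable.snd.comp Computable.snd)
      (Computable.cond hbool (Computable.const 0) (Computable.const 1))).to₂
  exact (Computable.nat_rec (f := fun p : ℕ × ℕ => p.2) (g := fun _ : ℕ × ℕ => (0 : ℕ))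
    Computable.snd (Computable.const 0) hstep).to₂

/-- The stage-`s` approximation to the change set. -/
def DsApp (As : ℕ → ℕ → Bool) (s z : ℕ) : Bool :=
  decide (z.unpair.2 + 1 ≤ chCnt As z.unpair.1 s)

open Classical in
/-- The change set of the approximation `As`. -/
noncomputable def DLim (As : ℕ → ℕ → Bool) (z : ℕ) : Bool :=
  decide (∃ s, z.unpair.2 + 1 ≤ chCnt As z.unpair.1 s)

lemma DsApp_computable {As : ℕ → ℕ → Bool} (hAs : Computable₂ As) :
    Computable₂ (DsApp As) := by
  have h1 : Computable fun p : ℕ × ℕ => p.2.unpair.2 + 1 :=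
    (Primrec.succ.to_comp).comp
      (Computable.snd.comp (Computable.unpair.comp Computable.snd))
  have h2 : Computable fun p : ℕ × ℕ => chCnt As p.2.unpair.1 p.1 :=
    (chCnt_computable hAs).comp
      (Computable.fst.comp (Computable.unpair.comp Computable.snd)) Computable.fst
  exact ((Primrec.nat_le.decide.to_comp).comp h1 h2).to₂

lemma DLim_eq_true_iff (As : ℕ → ℕ → Bool) (z : ℕ) :
    DLim As z = true ↔ ∃ s, DsApp As s z = true := by
  simp [DLim, DsApp]

lemma DLim_eq_false_iff (As : ℕ → ℕ → Bool) (z : ℕ) :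
    DLim As z = false ↔ ∀ s, chCnt As z.unpair.1 s ≤ z.unpair.2 := by
  simp [DLim]

lemma recIn_of_natPartrec {O f : ℕ →. ℕ} (h : Nat.Partrec f) : RecIn O f := by
  induction h with
  | zero => exact RecIn.zero
  | succ => exact RecIn.succ
  | left => exact RecIn.left
  | right => exact RecIn.right
  | pair _ _ ih1 ih2 => exact RecIn.pair ih1 ih2
  | comp _ _ ih1 ih2 => exact RecIn.comp ih1 ih2
  | prec _ _ ih1 ih2 => exact RecIn.prec ih1 ih2
  | rfind _ ih => exact RecIn.rfind ih

lemma RecIn.of_eq {O f g : ℕ →. ℕ} (h : RecIn O f) (H : ∀ n, f n = g n) : RecIn O g :=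
  (funext H : f = g) ▸ h

lemma recIn_id {O : ℕ →. ℕ} : RecIn O fun n => Part.some n :=
  (recIn_of_natPartrec (Nat.Partrec.of_primrec Nat.Primrec.id)).of_eq fun n => rfl

lemma stageCost_nonneg {c : ℕ → ℕ → ℚ} (hc : CostFunction c) (As : ℕ → ℕ → Bool) (s : ℕ) :
    0 ≤ stageCost c As s := by
  unfold stageCost
  split
  · exact le_refl 0
  · split
    · exact hc.2.1 _ _
    · exact le_refl 0


lemma stageCost_DsApp_le {c : ℕ → ℕ → ℚ} (hc : CostFunction c) (As : ℕ → ℕ → Bool) (s : ℕ) :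
    stageCost c (DsApp As) s ≤ stageCost c As s := by
  cases s with
  | zero => simp [stageCost]
  | succ n =>
    unfold stageCost
    rw [if_neg (Nat.succ_ne_zero n), if_neg (Nat.succ_ne_zero n)]
    simp only [Nat.succ_sub_one]
    by_cases hDch : ∃ z, DsApp As (n + 1) z ≠ DsApp As n z
    · rw [dif_pos hDch]
      have hspec : DsApp As (n + 1) (Nat.find hDch) ≠ DsApp As n (Nat.find hDch) :=
        Nat.find_spec hDch
      have hAch : As (n + 1) ((Nat.find hDch).unpair.1) ≠ As n ((Nat.find hDch).unpair.1) := by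
        intro heq
        exact hspec (by unfold DsApp; exact congrArg (fun k => decide (_ + 1 ≤ k)) ((chCnt_succ_eq_iff As _ n).2 heq))
      rw [dif_pos ⟨_, hAch⟩]
      exact hc.2.2.2 _ _ _ (le_trans (Nat.find_min' _ hAch) (Nat.unpair_left_le _))
    · rw [dif_neg hDch]
      split
      · exact hc.2.1 _ _
      · exact le_refl 0

/-- If a Δ⁰₂ set `A` obeys a cost function `c`, then some c.e. set
`D ≥_T A` also obeys `c`. -/
theorem ce_set_above_obeying (c : ℕ → ℕ → ℚ) (hc : CostFunction c)
    (A : ℕ → Bool) (hA : Delta02 A) (hobeys : Obeys A c) :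
    ∃ D : ℕ → Bool, CE D ∧ TuringLE A D ∧ Obeys D c := by
  obtain ⟨As, ⟨hAscomp, hAsapp⟩, B, hB⟩ := hobeys
  refine ⟨DLim As, ?_, ?_, ?_⟩
  · -- c.e.
    refine ⟨fun z => Nat.rfind fun s => Part.some (DsApp As s z), ?_, ?_⟩
    · exact Partrec.nat_iff.1 (Partrec.rfind
        (Computable₂.partrec₂
          (((DsApp_computable hAscomp).comp Computable.snd Computable.fst).to₂)))
    · intro z
      have hdom : (Nat.rfind fun s => Part.some (DsApp As s z)).Dom ↔
          ∃ s, DsApp As s z = true := by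
        refine Nat.rfind_dom.trans ?_
        simp
      rw [DLim_eq_true_iff, hdom]
  · -- Turing reducibility
    have hexf : ∀ x, ∃ i, DLim As (Nat.pair x i) = false := by
      intro x
      obtain ⟨t, ht⟩ := chCnt_stab_zero hAsapp x
      refine ⟨chCnt As x t, ?_⟩
      rw [DLim_eq_false_iff]
      simpa [Nat.unpair_pair] using ht
    have hNfalse : ∀ x, DLim As (Nat.pair x (Nat.find (hexf x))) = false :=
      fun x => Nat.find_spec (hexf x)
    have hNub : ∀ x s, chCnt As x s ≤ Nat.find (hexf x) := by
      intro x s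
      have := (DLim_eq_false_iff As _).1 (hNfalse x) s
      simpa [Nat.unpair_pair] using this
    have hNmin : ∀ x i, i < Nat.find (hexf x) → DLim As (Nat.pair x i) = true := by
      intro x i hi
      have := Nat.find_min (hexf x) hi
      simpa using this
    have hNex : ∀ x, ∃ s, Nat.find (hexf x) ≤ chCnt As x s := by
      intro x
      cases hNx : Nat.find (hexf x) with
      | zero => exact ⟨0, by omega⟩
      | succ k =>
        have h1 : DLim As (Nat.pair x k) = true := hNmin x k (by omega)
        simp only [DLim, Nat.unpair_pair, decide_eq_true_eq] at h1
        obtain ⟨s, hs⟩ := h1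
        exact ⟨s, by omega⟩
    -- value of the oracle rfind
    have hrval : ∀ x, (Nat.rfind fun n =>
        (fun m => m = 0) <$> charFn (DLim As) (Nat.pair x n)) = Part.some (Nat.find (hexf x)) := by
      intro x
      rw [Part.eq_some_iff]
      refine Nat.mem_rfind.2 ⟨?_, ?_⟩
      · simp [charFn, hNfalse x]
      · intro m hm
        simp [charFn, hNmin x m hm]
    -- the total recursive post-processing function
    have hGpr : Partrec (fun m =>
        (Nat.rfind fun s => Part.some (decide (m.unpair.2 ≤ chCnt As m.unpair.1 s))).map
          fun s => cond (As s m.unpair.1) 1 0 : ℕ →. ℕ) := by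
      apply Partrec.map
      · apply Partrec.rfind
        exact Computable₂.partrec₂ (((Primrec.nat_le.decide.to_comp).comp
          (Computable.snd.comp (Computable.unpair.comp Computable.fst))
          ((chCnt_computable hAscomp).comp
            (Computable.fst.comp (Computable.unpair.comp Computable.fst))
            Computable.snd)).to₂)
      · exact (Computable.cond
          (hAscomp.comp Computable.snd
            (Computable.fst.comp (Computable.unpair.comp Computable.fst)))
          (Computable.const 1) (Computable.const 0)).to₂
    have hGval : ∀ x, ((Nat.rfind fun s => Part.some
          (decide ((Nat.pair x (Nat.find (hexf x))).unpair.2 ≤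
            chCnt As (Nat.pair x (Nat.find (hexf x))).unpair.1 s))).map
          fun s => cond (As s (Nat.pair x (Nat.find (hexf x))).unpair.1) 1 0)
            = Part.some (cond (A x) 1 0) := by
      intro x
      have hex2 : ∃ s, Nat.find (hexf x) ≤ chCnt As x s := hNex x
      have hmem : Nat.find hex2 ∈ Nat.rfind fun s => Part.some
          (decide ((Nat.pair x (Nat.find (hexf x))).unpair.2 ≤
            chCnt As (Nat.pair x (Nat.find (hexf x))).unpair.1 s)) := by
        refine Nat.mem_rfind.2 ⟨?_, ?_⟩
        · simp only [Nat.unpair_pair]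
          simpa using Nat.find_spec hex2
        · intro m hm
          simp only [Nat.unpair_pair]
          simpa using Nat.find_min hex2 hm
      have hstable : ∀ s, Nat.find hex2 ≤ s → As s x = As (Nat.find hex2) x := by
        intro s hs
        induction s with
        | zero => rw [Nat.le_zero.mp hs]
        | succ n ih =>
          rcases Nat.lt_or_ge (Nat.find hex2) (n + 1) with h1 | h1
          · have h2 : Nat.find hex2 ≤ n := by omega
            rw [← ih h2]
            apply (chCnt_succ_eq_iff As x n).1
            have ha : Nat.find (hexf x) ≤ chCnt As x n :=
              le_trans (Nat.find_spec hex2) (chCnt_mono As x h2)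
            have hb := hNub x (n + 1)
            have hd := chCnt_mono As x (show n ≤ n + 1 by omega)
            omega
          · rw [le_antisymm hs h1]
      obtain ⟨t, ht⟩ := hAsapp x
      have hval : As (Nat.find hex2) x = A x := by
        rw [← hstable (max (Nat.find hex2) t) (le_max_left _ _), ht _ (le_max_right _ _)]
      have hr2 := Part.eq_some_iff.2 hmem
      rw [hr2, Part.map_some]
      simp only [Nat.unpair_pair]
      rw [hval]
    have hfinal := RecIn.comp (recIn_of_natPartrec (Partrec.nat_iff.1 hGpr))
      (RecIn.pair (recIn_id (O := charFn (DLim As)))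
        (RecIn.rfind (RecIn.oracle (O := charFn (DLim As)))))
    apply hfinal.of_eq
    intro n
    show (Nat.pair <$> Part.some n <*>
        Nat.rfind fun k => (fun m => m = 0) <$> charFn (DLim As) (Nat.pair n k)) >>= _
      = charFn A n
    rw [hrval n]
    have hseq : (Nat.pair <$> Part.some n <*> Part.some (Nat.find (hexf n))) =
        Part.some (Nat.pair n (Nat.find (hexf n))) := by
      simp [Seq.seq]
    rw [hseq]
    simp only [Part.bind_eq_bind, Part.bind_some]
    exact hGval n
  · -- D obeys c
    refine ⟨DsApp As, ⟨DsApp_computable hAscomp, ?_⟩, B, ?_⟩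
    · intro z
      obtain ⟨t, ht⟩ := chCnt_stab hAsapp z.unpair.1
      refine ⟨t, fun s hs => ?_⟩
      simp only [DsApp, DLim]
      rw [decide_eq_decide]
      constructor
      · intro hle
        exact ⟨s, hle⟩
      · rintro ⟨s', hle⟩
        rw [ht s hs]
        calc z.unpair.2 + 1 ≤ chCnt As z.unpair.1 s' := hle
          _ ≤ chCnt As z.unpair.1 (max s' t) := chCnt_mono As _ (le_max_left _ _)
          _ = chCnt As z.unpair.1 t := ht _ (le_max_right _ _)
    · intro F
      exact le_trans (Finset.sum_le_sum fun s _ => stageCost_DsApp_le hc As s) (hB F)
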